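/- Let D be an invertible n×n real matrix with nonnegative off-diagonal entries, let d := −D·𝟙 have nonnegative entries, let π be a probability row vector, and let φ be a strictly positive row vector with φ·𝟙 = 1 and φ·(D + d·π) = 0. Define ψ := π·(−D)^{−1}·diag(d) and D'(i,j) := D(j,i)·φ(j)/φ(i). Then D' is invertible and, with M := (−D)^{−1}, M' := (−D')^{−1} and d' := −D'·𝟙: (i) ψ_i · (M'·𝟙)_i = (π·M·M·diag(d))_i for every i, i.e. the conditional mean-absorption-time vector of the reversed representation equals the conditional exit-time vector a of the original (m' = a); and (ii) ψ·M'·diag(d') = π, i.e. the exit probability vector of the reversed representation equals the initial vector of the original (ψ' = π). -/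

import Mathlib

open Matrix

theorem stmt6 {n : ℕ} (D : Matrix (Fin n) (Fin n) ℝ) (hDinv : IsUnit D.det)
    (hoff : ∀ i j, i ≠ j → 0 ≤ D i j)
    (d : Fin n → ℝ) (hd : d = (-D) *ᵥ (fun _ => 1)) (hdnn : ∀ i, 0 ≤ d i)
    (π : Fin n → ℝ) (hπnn : ∀ i, 0 ≤ π i) (hπsum : ∑ i, π i = 1)
    (φ : Fin n → ℝ) (hφpos : ∀ i, 0 < φ i) (hφsum : ∑ i, φ i = 1)
    (hφ : φ ᵥ* (D + Matrix.vecMulVec d π) = 0)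
    (ψ : Fin n → ℝ) (hψ : ψ = π ᵥ* ((-D)⁻¹ * Matrix.diagonal d))
    (D' : Matrix (Fin n) (Fin n) ℝ) (hD' : ∀ i j, D' i j = D j i * φ j / φ i) :
    IsUnit D'.det ∧
      (∀ i, ψ i * ((-D')⁻¹ *ᵥ (fun _ => 1)) i
          = (π ᵥ* ((-D)⁻¹ * (-D)⁻¹ * Matrix.diagonal d)) i) ∧
      ψ ᵥ* ((-D')⁻¹ * Matrix.diagonal ((-D') *ᵥ (fun _ => 1))) = π := by
  have hφne : ∀ i, φ i ≠ 0 := fun i => (hφpos i).ne'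
  set M := (-D)⁻¹ with hM
  have hdetD : D.det ≠ 0 := hDinv.ne_zero
  have hnD : IsUnit (-D).det := by
    rw [Matrix.det_neg]
    exact isUnit_iff_ne_zero.mpr
      (mul_ne_zero (pow_ne_zero _ (by norm_num)) hdetD)
  have hMD : M * (-D) = 1 := Matrix.nonsing_inv_mul _ hnD
  have hDM : (-D) * M = 1 := Matrix.mul_nonsing_inv _ hnD
  have hd1 : M *ᵥ d = fun _ => 1 := by
    rw [hd, Matrix.mulVec_mulVec, hMD, Matrix.one_mulVec]
  set c : ℝ := ∑ j, φ j * d j with hc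
  -- φ ᵥ* (-D) = c • π
  have hφnD : φ ᵥ* (-D) = c • π := by
    funext i
    have h0 := congrFun hφ i
    simp only [Matrix.vecMul, dotProduct, Matrix.add_apply,
      Matrix.vecMulVec_apply, Pi.zero_apply] at h0
    have h0' : ∑ j, (φ j * D j i) + (∑ j, φ j * d j) * π i = 0 := by
      rw [← h0, Finset.sum_mul, ← Finset.sum_add_distrib]
      apply Finset.sum_congr rfl
      intro j _; ring
    simp only [Matrix.vecMul, dotProduct, Matrix.neg_apply, mul_neg,
      Pi.smul_apply, smul_eq_mul]
    rw [Finset.sum_neg_distrib]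
    linarith
  have hφM : φ = c • (π ᵥ* M) := by
    have h1 := congrArg (fun v => v ᵥ* M) hφnD
    simpa [Matrix.vecMul_vecMul, hDM, Matrix.vecMul_one,
      Matrix.smul_vecMul] using h1
  have hc0 : c ≠ 0 := by
    intro h
    rw [h, zero_smul] at hφM
    have : (1 : ℝ) = 0 := by
      rw [← hφsum, hφM]; simp
    norm_num at this
  have hφi : ∀ i, φ i = c * (π ᵥ* M) i := fun i => by
    rw [hφM]; simp
  have hπM0 : ∀ i, (π ᵥ* M) i ≠ 0 := by
    intro i h
    exact hφne i (by rw [hφi i, h, mul_zero])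
  -- the explicit inverse of -D'
  set N : Matrix (Fin n) (Fin n) ℝ := Matrix.of (fun i j => M j i * φ j / φ i)
    with hN
  have hD'N : (-D') * N = 1 := by
    ext i k
    simp only [Matrix.mul_apply, Matrix.neg_apply, hD', hN, Matrix.of_apply]
    have step : ∀ j, -(D j i * φ j / φ i) * (M k j * φ k / φ j)
        = (φ k / φ i) * (M k j * (-D) j i) := by
      intro j
      rw [Matrix.neg_apply]
      have e : -(D j i * φ j / φ i) * (M k j * φ k / φ j)
          = ((φ k / φ i) * (M k j * -(D j i))) * (φ j / φ j) := by ring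
      rw [e, div_self (hφne j), mul_one]
    rw [Finset.sum_congr rfl (fun j _ => step j), ← Finset.mul_sum]
    have hMDik : ∑ j, M k j * (-D) j i = (1 : Matrix (Fin n) (Fin n) ℝ) k i := by
      rw [← hMD, Matrix.mul_apply]
    rw [hMDik, Matrix.one_apply]
    by_cases h : i = k
    · subst h; simp [Matrix.one_apply, div_self (hφne i)]
    · simp [Matrix.one_apply, h, Ne.symm h]
  have hND : N * (-D') = 1 := by
    ext i k
    simp only [Matrix.mul_apply, Matrix.neg_apply, hD', hN, Matrix.of_apply]
    have step : ∀ j, (M j i * φ j / φ i) * -(D k j * φ k / φ j)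
        = (φ k / φ i) * ((-D) k j * M j i) := by
      intro j
      rw [Matrix.neg_apply]
      have e : (M j i * φ j / φ i) * -(D k j * φ k / φ j)
          = ((φ k / φ i) * (-(D k j) * M j i)) * (φ j / φ j) := by ring
      rw [e, div_self (hφne j), mul_one]
    rw [Finset.sum_congr rfl (fun j _ => step j), ← Finset.mul_sum]
    have hDMik : ∑ j, (-D) k j * M j i = (1 : Matrix (Fin n) (Fin n) ℝ) k i := by
      rw [← hDM, Matrix.mul_apply]
    rw [hDMik, Matrix.one_apply]
    by_cases h : i = k
    · subst h; simp [Matrix.one_apply, div_self (hφne i)]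
    · simp [Matrix.one_apply, h, Ne.symm h]
  have hinvD' : (-D')⁻¹ = N := Matrix.inv_eq_right_inv hD'N
  have hunit : IsUnit D'.det := by
    have h1 : IsUnit (-D').det := Matrix.isUnit_det_of_right_inverse hD'N
    rw [Matrix.det_neg] at h1
    rcases isUnit_iff_ne_zero.mp h1 with h
    exact isUnit_iff_ne_zero.mpr (fun h2 => h (by rw [h2, mul_zero]))
  have hψ' : ∀ i, ψ i = (π ᵥ* M) i * d i := by
    intro i
    rw [hψ, ← Matrix.vecMul_vecMul, Matrix.vecMul_diagonal]
  have hMd : ∀ i, ∑ j, M i j * d j = 1 := by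
    intro i
    have := congrFun hd1 i
    simpa [Matrix.mulVec, dotProduct] using this
  refine ⟨hunit, ?_, ?_⟩
  · -- part (i)
    intro i
    rw [hinvD']
    have hRHS : (π ᵥ* (M * M * Matrix.diagonal d)) i
        = (((π ᵥ* M) ᵥ* M) i) * d i := by
      rw [← Matrix.vecMul_vecMul, ← Matrix.vecMul_vecMul, Matrix.vecMul_diagonal]
    rw [hRHS]
    have hsum : (N *ᵥ fun _ => 1) i = ∑ j, (π ᵥ* M) j * M j i / (π ᵥ* M) i := by
      simp only [hN, Matrix.mulVec, dotProduct, Matrix.of_apply, mul_one]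
      apply Finset.sum_congr rfl
      intro j _
      rw [hφi j, hφi i]
      rw [show M j i * (c * (π ᵥ* M) j) / (c * (π ᵥ* M) i)
            = (c * ((π ᵥ* M) j * M j i)) / (c * (π ᵥ* M) i) from by ring,
        mul_div_mul_left _ _ hc0]
    rw [hψ' i, hsum, ← Finset.sum_div]
    have heq : (π ᵥ* M) i * d i * ((∑ j, (π ᵥ* M) j * M j i) / (π ᵥ* M) i)
        = ((∑ j, (π ᵥ* M) j * M j i) * d i)
          * ((π ᵥ* M) i / (π ᵥ* M) i) := by ring
    rw [heq, div_self (hπM0 i), mul_one]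
    rfl
  · -- part (ii)
    funext i
    rw [hinvD', ← Matrix.vecMul_vecMul, Matrix.vecMul_diagonal]
    have hd'i : ((-D') *ᵥ fun _ => 1) i = c * π i / φ i := by
      simp only [Matrix.mulVec, dotProduct, Matrix.neg_apply, hD', mul_one]
      have h2 : ∑ j, -(D j i * φ j / φ i) = (∑ j, φ j * (-D) j i) / φ i := by
        rw [Finset.sum_div]
        apply Finset.sum_congr rfl
        intro j _
        rw [Matrix.neg_apply]
        ring
      have h1 : (∑ j, φ j * (-D) j i) = c * π i := by
        have := congrFun hφnD i
        simpa [Matrix.vecMul, dotProduct] using this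
      rw [h2, h1]
    have hψN : (ψ ᵥ* N) i = φ i / c := by
      simp only [hN, Matrix.vecMul, dotProduct, Matrix.of_apply]
      have step : ∀ j, ψ j * (M i j * φ i / φ j) = φ i / c * (M i j * d j) := by
        intro j
        rw [hψ' j, hφi j]
        have hne := hπM0 j
        field_simp
      rw [Finset.sum_congr rfl (fun j _ => step j), ← Finset.mul_sum, hMd i,
        mul_one]
    rw [hψN, hd'i]
    rw [show φ i / c * (c * π i / φ i) = π i * ((c * φ i) / (c * φ i)) from by ring,
      div_self (mul_ne_zero hc0 (hφne i)), mul_one]
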